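/- Let Λ_N, Λ_M, μ, κ, γ, ν, α, σ, β be positive, δ = 0, and suppose R₀ = √(αβ/(κ(γ+μ))) > 1. Define φ = (αβμ/((γ+μ)(α+μ)))·(1 − 1/R₀²), U₀* = Λ_M/(κ+φ), V₁* = Λ_Mφ/(κ(κ+φ)), S₀₁* = Λ_N(κ+φ)/(μ(κ+φ)+αφ), I₁* = Λ_Nαφ/((γ+μ)(μ(κ+φ)+αφ)), R₁* = (γ/(ν+μ))I₁*, S₁* = (νγ/((ν+μ)μ))I₁*. Then the point E₁ = (S₀₁*, I₁*, 0, R₁*, 0, S₁*, 0, 0, 0, 0, U₀*, V₁*, 0, 0) is an equilibrium of the two-strain dengue model with the constants N = Λ_N/μ and M = Λ_M/κ; that is, the right-hand side of the system vanishes at E₁. -/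

import Mathlib

set_option maxHeartbeats 1000000


/-- Right-hand side of the two-strain dengue model, as a vector field on `ℝ¹⁴`.
State ordering: `(S, I₁, I₂, R₁, R₂, S₁, S₂, I₁₂, I₂₁, R, U, V₁, V₂, V₁₂)`. -/
noncomputable def dengueRHS (ΛN ΛM μ κ γ ν δ α σ β N M : ℝ)
    (x : Fin 14 → ℝ) : Fin 14 → ℝ :=
  ![ΛN - α / M * x 0 * (x 11 + x 12 + 2 * x 13) - μ * x 0,
    α / M * x 0 * (x 11 + x 13) - (γ + μ) * x 1,
    α / M * x 0 * (x 12 + x 13) - (γ + μ) * x 2,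
    γ * x 1 - (ν + μ) * x 3,
    γ * x 2 - (ν + μ) * x 4,
    ν * x 3 - σ / M * x 5 * (x 12 + x 13) - μ * x 5,
    ν * x 4 - σ / M * x 6 * (x 11 + x 13) - μ * x 6,
    σ / M * x 5 * (x 12 + x 13) - (γ + μ + δ) * x 7,
    σ / M * x 6 * (x 11 + x 13) - (γ + μ + δ) * x 8,
    γ * (x 7 + x 8) - μ * x 9,
    ΛM - β / N * x 10 * (x 1 + x 2 + x 7 + x 8) - κ * x 10,
    β / N * x 10 * (x 1 + x 8) - β / N * x 11 * (x 2 + x 7) - κ * x 11,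
    β / N * x 10 * (x 2 + x 7) - β / N * x 12 * (x 1 + x 8) - κ * x 12,
    β / N * x 11 * (x 2 + x 7) + β / N * x 12 * (x 1 + x 8) - κ * x 13]

/-- With `δ = 0` and `R₀ = √(αβ/(κ(γ+μ))) > 1`, the one-strain point
`E₁ = (S₀₁*, I₁*, 0, R₁*, 0, S₁*, 0, 0, 0, 0, U₀*, V₁*, 0, 0)` is an equilibrium of
the two-strain dengue model with constants `N = Λ_N/μ` and `M = Λ_M/κ`:
the right-hand side vanishes at `E₁`. -/
theorem one_strain_point_is_equilibrium
    (ΛN ΛM μ κ γ ν α σ β : ℝ)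
    (hΛN : 0 < ΛN) (hΛM : 0 < ΛM) (hμ : 0 < μ) (hκ : 0 < κ) (hγ : 0 < γ)
    (hν : 0 < ν) (hα : 0 < α) (hσ : 0 < σ) (hβ : 0 < β)
    (hR₀ : 1 < Real.sqrt (α * β / (κ * (γ + μ))))
    (R₀ φ U₀star V₁star S₀₁star I₁star R₁star S₁star : ℝ)
    (hR₀def : R₀ = Real.sqrt (α * β / (κ * (γ + μ))))
    (hφ : φ = α * β * μ / ((γ + μ) * (α + μ)) * (1 - 1 / R₀ ^ 2))
    (hU₀ : U₀star = ΛM / (κ + φ))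
    (hV₁ : V₁star = ΛM * φ / (κ * (κ + φ)))
    (hS₀₁ : S₀₁star = ΛN * (κ + φ) / (μ * (κ + φ) + α * φ))
    (hI₁ : I₁star = ΛN * α * φ / ((γ + μ) * (μ * (κ + φ) + α * φ)))
    (hR₁ : R₁star = γ / (ν + μ) * I₁star)
    (hS₁ : S₁star = ν * γ / ((ν + μ) * μ) * I₁star) :
    dengueRHS ΛN ΛM μ κ γ ν 0 α σ β (ΛN / μ) (ΛM / κ)
        ![S₀₁star, I₁star, 0, R₁star, 0, S₁star, 0, 0, 0, 0, U₀star, V₁star, 0, 0]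
      = 0 := by

  have hγμ : (0:ℝ) < γ + μ := by linarith
  have hαμ : (0:ℝ) < α + μ := by linarith
  have hνμ : (0:ℝ) < ν + μ := by linarith
  have hR2 : R₀ ^ 2 = α * β / (κ * (γ + μ)) := by
    rw [hR₀def, Real.sq_sqrt]; positivity
  have hR₀pos : (1:ℝ) < R₀ := hR₀def ▸ hR₀
  have hR₀ne : R₀ ≠ 0 := by linarith
  have hkey : (γ + μ) * (α + μ) * φ = μ * (α * β - κ * (γ + μ)) := by
    rw [hφ, hR2]
    field_simp
  have hφpos : 0 < φ := by
    have h1 : 1 < R₀ ^ 2 := by nlinarith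
    rw [hR2] at h1
    have h2 : κ * (γ + μ) < α * β := by
      have := (one_lt_div (by positivity : (0:ℝ) < κ * (γ + μ))).mp h1
      linarith
    nlinarith [mul_pos hγμ hαμ]
  have hκφ : (0:ℝ) < κ + φ := by linarith
  have hD : (0:ℝ) < μ * (κ + φ) + α * φ := by positivity
  -- component identities
  have hc : α / (ΛM / κ) * V₁star = α * φ / (κ + φ) := by
    rw [hV₁]; field_simp
  have h0 : ΛN - α * φ / (κ + φ) * S₀₁star - μ * S₀₁star = 0 := by
    rw [hS₀₁]; field_simp; ring
  have h1 : α * φ / (κ + φ) * S₀₁star - (γ + μ) * I₁star = 0 := by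
    rw [hS₀₁, hI₁]; field_simp; ring
  have h3 : γ * I₁star - (ν + μ) * R₁star = 0 := by
    rw [hR₁]; field_simp; ring
  have h5 : ν * R₁star - μ * S₁star = 0 := by
    rw [hR₁, hS₁]; field_simp; ring
  have hf : β / (ΛN / μ) * I₁star = φ := by
    rw [hI₁]
    field_simp
    linear_combination -hkey
  have h10 : ΛM - φ * U₀star - κ * U₀star = 0 := by
    rw [hU₀]; field_simp; ring
  have h11 : φ * U₀star - κ * V₁star = 0 := by
    rw [hU₀, hV₁]; field_simp; ring
  funext i
  fin_cases i
  · show ΛN - α / (ΛM / κ) * S₀₁star * (V₁star + 0 + 2 * 0) - μ * S₀₁star = 0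
    linear_combination h0 - S₀₁star * hc
  · show α / (ΛM / κ) * S₀₁star * (V₁star + 0) - (γ + μ) * I₁star = 0
    linear_combination S₀₁star * hc + h1
  · show α / (ΛM / κ) * S₀₁star * (0 + 0) - (γ + μ) * 0 = 0
    ring
  · show γ * I₁star - (ν + μ) * R₁star = 0
    linear_combination h3
  · show γ * 0 - (ν + μ) * 0 = 0
    ring
  · show ν * R₁star - σ / (ΛM / κ) * S₁star * (0 + 0) - μ * S₁star = 0
    linear_combination h5
  · show ν * 0 - σ / (ΛM / κ) * 0 * (V₁star + 0) - μ * 0 = 0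
    ring
  · show σ / (ΛM / κ) * S₁star * (0 + 0) - (γ + μ + 0) * 0 = 0
    ring
  · show σ / (ΛM / κ) * 0 * (V₁star + 0) - (γ + μ + 0) * 0 = 0
    ring
  · show γ * (0 + 0) - μ * 0 = 0
    ring
  · show ΛM - β / (ΛN / μ) * U₀star * (I₁star + 0 + 0 + 0) - κ * U₀star = 0
    linear_combination h10 - U₀star * hf
  · show β / (ΛN / μ) * U₀star * (I₁star + 0) - β / (ΛN / μ) * V₁star * (0 + 0) - κ * V₁star = 0
    linear_combination U₀star * hf + h11
  · show β / (ΛN / μ) * U₀star * (0 + 0) - β / (ΛN / μ) * 0 * (I₁star + 0) - κ * 0 = 0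
    ring
  · show β / (ΛN / μ) * V₁star * (0 + 0) + β / (ΛN / μ) * 0 * (I₁star + 0) - κ * 0 = 0
    ring
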